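/- Let B̃ be the 8×7 integer matrix with columns √24·f_1,…,√24·f_7, where f_1,…,f_7 are the vectors in ℝ⁸ obtained by normalizing the permutations of (−3,−3,1,…,1) having −3 in positions {1,2},{1,3},{1,4},{1,5},{1,6},{1,7},{3,6} respectively. Then for every nonzero x ∈ ℤ⁷, ‖B̃x‖² ≥ 24, i.e., the lattice B̃ℤ⁷ (rescaled by 1/√24) has minimal distance 1. -/

import Mathlib

open Matrix BigOperators

private lemma aux_neg_le_sq (k : ℤ) : -k ≤ k^2 := by
  rcases le_or_gt 0 k with h | h
  · nlinarith
  · nlinarith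

private lemma aux_sq_zero (k : ℤ) (h : k^2 ≤ 0) : k = 0 :=
  (pow_eq_zero_iff two_ne_zero).mp (le_antisymm h (sq_nonneg k))

private lemma aux_even (k : ℤ) : ∃ c, k^2 + k = 2*c := by
  obtain ⟨c, hc⟩ := Int.even_mul_succ_self k
  exact ⟨c, by nlinarith [hc]⟩

theorem stmt17
    (Bt : Matrix (Fin 8) (Fin 7) ℤ)
    (hBt : Bt = !![-3,-3,-3,-3,-3,-3,1;
                   -3,1,1,1,1,1,1;
                   1,-3,1,1,1,1,-3;
                   1,1,-3,1,1,1,1;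
                   1,1,1,-3,1,1,1;
                   1,1,1,1,-3,1,-3;
                   1,1,1,1,1,-3,1;
                   1,1,1,1,1,1,1])
    (x : Fin 7 → ℤ) (hx : x ≠ 0) :
    24 ≤ ∑ i, (Bt.mulVec x i) ^ 2 := by
  have hx' : ¬(x 0 = 0 ∧ x 1 = 0 ∧ x 2 = 0 ∧ x 3 = 0 ∧ x 4 = 0 ∧ x 5 = 0 ∧ x 6 = 0) := by
    rintro ⟨h0, h1, h2, h3, h4, h5, h6⟩
    exact hx (funext fun i => by fin_cases i <;> assumption)
  subst hBt
  simp [Matrix.mulVec, dotProduct, Fin.sum_univ_succ]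
  have hqr := Int.mul_ediv_add_emod (x 0 + x 1 + x 2 + x 3 + x 4 + x 5 + x 6) 4
  set q := (x 0 + x 1 + x 2 + x 3 + x 4 + x 5 + x 6) / 4 with hq
  set r := (x 0 + x 1 + x 2 + x 3 + x 4 + x 5 + x 6) % 4 with hr
  have hr0 : 0 ≤ r := Int.emod_nonneg _ (by norm_num)
  have hr4 : r < 4 := Int.emod_lt_of_pos _ (by norm_num)
  clear_value q r
  rw [show
    (-(3 * x 0) + (-(3 * x 1) + (-(3 * x 2) + (-(3 * x 3) + (-(3 * x 4) + (-(3 * x 5) + x 6)))))) ^ 2 +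
      ((-(3 * x 0) + (x 1 + (x 2 + (x 3 + (x 4 + (x 5 + x 6)))))) ^ 2 +
        ((x 0 + (-(3 * x 1) + (x 2 + (x 3 + (x 4 + (x 5 + -(3 * x 6))))))) ^ 2 +
          ((x 0 + (x 1 + (-(3 * x 2) + (x 3 + (x 4 + (x 5 + x 6)))))) ^ 2 +
            ((x 0 + (x 1 + (x 2 + (-(3 * x 3) + (x 4 + (x 5 + x 6)))))) ^ 2 +
              ((x 0 + (x 1 + (x 2 + (x 3 + (-(3 * x 4) + (x 5 + -(3 * x 6))))))) ^ 2 +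
                ((x 0 + (x 1 + (x 2 + (x 3 + (x 4 + (-(3 * x 5) + x 6)))))) ^ 2 +
                  (x 0 + (x 1 + (x 2 + (x 3 + (x 4 + (x 5 + x 6)))))) ^ 2))))))
    = (4*(q - (x 0 + x 1 + x 2 + x 3 + x 4 + x 5)) + r)^2
      + (4*(q - x 0) + r)^2
      + (4*(q - (x 1 + x 6)) + r)^2
      + (4*(q - x 2) + r)^2
      + (4*(q - x 3) + r)^2
      + (4*(q - (x 4 + x 6)) + r)^2
      + (4*(q - x 5) + r)^2
      + (4*q + r)^2
    from by linear_combination (8*(x 0 + x 1 + x 2 + x 3 + x 4 + x 5 + x 6) - 32*q - 8*r) * hqr]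
  set k0 := q - (x 0 + x 1 + x 2 + x 3 + x 4 + x 5) with hk0
  set k1 := q - x 0 with hk1
  set k2 := q - (x 1 + x 6) with hk2
  set k3 := q - x 2 with hk3
  set k4 := q - x 3 with hk4
  set k5 := q - (x 4 + x 6) with hk5
  set k6 := q - x 5 with hk6
  have hsum : k0 + k1 + k2 + k3 + k4 + k5 + k6 + q = -2*r := by
    rw [hk0, hk1, hk2, hk3, hk4, hk5, hk6]; linarith [hqr]
  clear_value k0 k1 k2 k3 k4 k5 k6
  rw [show (4*k0 + r)^2 + (4*k1 + r)^2 + (4*k2 + r)^2 + (4*k3 + r)^2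
      + (4*k4 + r)^2 + (4*k5 + r)^2 + (4*k6 + r)^2 + (4*q + r)^2
    = 16*(k0^2 + k1^2 + k2^2 + k3^2 + k4^2 + k5^2 + k6^2 + q^2)
      + 8*r*(k0 + k1 + k2 + k3 + k4 + k5 + k6 + q) + 8*r^2 from by ring, hsum]
  have hKge : -(k0 + k1 + k2 + k3 + k4 + k5 + k6 + q)
      ≤ k0^2 + k1^2 + k2^2 + k3^2 + k4^2 + k5^2 + k6^2 + q^2 := by
    linarith [aux_neg_le_sq k0, aux_neg_le_sq k1, aux_neg_le_sq k2, aux_neg_le_sq k3,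
      aux_neg_le_sq k4, aux_neg_le_sq k5, aux_neg_le_sq k6, aux_neg_le_sq q]
  interval_cases r
  · -- r = 0
    have h1 : 1 ≤ k0^2 + k1^2 + k2^2 + k3^2 + k4^2 + k5^2 + k6^2 + q^2 := by
      by_contra h
      push_neg at h
      have h' : k0^2 + k1^2 + k2^2 + k3^2 + k4^2 + k5^2 + k6^2 + q^2 ≤ 0 := by
        linarith [Int.lt_iff_add_one_le.mp h]
      have z0 : k0 = 0 := aux_sq_zero _ (by linarith [sq_nonneg k1, sq_nonneg k2, sq_nonneg k3, sq_nonneg k4, sq_nonneg k5, sq_nonneg k6, sq_nonneg q])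
      have z1 : k1 = 0 := aux_sq_zero _ (by linarith [sq_nonneg k0, sq_nonneg k2, sq_nonneg k3, sq_nonneg k4, sq_nonneg k5, sq_nonneg k6, sq_nonneg q])
      have z2 : k2 = 0 := aux_sq_zero _ (by linarith [sq_nonneg k0, sq_nonneg k1, sq_nonneg k3, sq_nonneg k4, sq_nonneg k5, sq_nonneg k6, sq_nonneg q])
      have z3 : k3 = 0 := aux_sq_zero _ (by linarith [sq_nonneg k0, sq_nonneg k1, sq_nonneg k2, sq_nonneg k4, sq_nonneg k5, sq_nonneg k6, sq_nonneg q])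
      have z4 : k4 = 0 := aux_sq_zero _ (by linarith [sq_nonneg k0, sq_nonneg k1, sq_nonneg k2, sq_nonneg k3, sq_nonneg k5, sq_nonneg k6, sq_nonneg q])
      have z5 : k5 = 0 := aux_sq_zero _ (by linarith [sq_nonneg k0, sq_nonneg k1, sq_nonneg k2, sq_nonneg k3, sq_nonneg k4, sq_nonneg k6, sq_nonneg q])
      have z6 : k6 = 0 := aux_sq_zero _ (by linarith [sq_nonneg k0, sq_nonneg k1, sq_nonneg k2, sq_nonneg k3, sq_nonneg k4, sq_nonneg k5, sq_nonneg q])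
      have z7 : q = 0 := aux_sq_zero _ (by linarith [sq_nonneg k0, sq_nonneg k1, sq_nonneg k2, sq_nonneg k3, sq_nonneg k4, sq_nonneg k5, sq_nonneg k6])
      rw [hk0] at z0; rw [hk1] at z1; rw [hk2] at z2; rw [hk3] at z3
      rw [hk4] at z4; rw [hk5] at z5; rw [hk6] at z6
      omega
    obtain ⟨c0, hc0⟩ := aux_even k0
    obtain ⟨c1, hc1⟩ := aux_even k1
    obtain ⟨c2, hc2⟩ := aux_even k2
    obtain ⟨c3, hc3⟩ := aux_even k3
    obtain ⟨c4, hc4⟩ := aux_even k4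
    obtain ⟨c5, hc5⟩ := aux_even k5
    obtain ⟨c6, hc6⟩ := aux_even k6
    obtain ⟨c7, hc7⟩ := aux_even q
    have hC : 1 ≤ 2*(c0 + c1 + c2 + c3 + c4 + c5 + c6 + c7) := by linarith
    have hC1 : 1 ≤ c0 + c1 + c2 + c3 + c4 + c5 + c6 + c7 := by omega
    have h2 : 2 ≤ k0^2 + k1^2 + k2^2 + k3^2 + k4^2 + k5^2 + k6^2 + q^2 := by linarith
    linarith
  · linarith
  · linarith
  · linarith
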